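/- Let S be a finite group, K ≤ S, t ∈ S. Let C = C_S(t) act by conjugation on X(K,t) = {K' ∈ [K]_S : t ∈ K'}, and let N = N_S(K) act by conjugation on T = K ∩ [t]_S (the elements of K that are S-conjugate to t). Then the map sending the C-orbit of K^s (where t^{s⁻¹} ∈ K) to the N-orbit of t^{s⁻¹} is a well-defined bijection from X(K,t)/C to T/N. -/

import Mathlib

section Aux
variable {S : Type*} [Group S]

lemma mem_map_conj' (K : Subgroup S) (a x : S) :
    x ∈ Subgroup.map (MulAut.conj a).toMonoidHom K ↔ a⁻¹ * x * a ∈ K := by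
  simp only [Subgroup.mem_map, MulEquiv.coe_toMonoidHom, MulAut.conj_apply]
  constructor
  · rintro ⟨k, hk, rfl⟩
    simpa [mul_assoc] using hk
  · intro h
    exact ⟨a⁻¹ * x * a, h, by group⟩

lemma map_conj_eq_iff' (K : Subgroup S) (a b : S) :
    Subgroup.map (MulAut.conj a).toMonoidHom K = Subgroup.map (MulAut.conj b).toMonoidHom K ↔
      a⁻¹ * b ∈ Subgroup.normalizer (K : Set S) := by
  rw [Subgroup.mem_normalizer_iff]
  constructor
  · intro h k
    have := SetLike.ext_iff.1 h (b * k * b⁻¹)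
    rw [mem_map_conj', mem_map_conj'] at this
    have h1 : b⁻¹ * (b * k * b⁻¹) * b = k := by group
    have h2 : a⁻¹ * (b * k * b⁻¹) * a = a⁻¹ * b * k * (a⁻¹ * b)⁻¹ := by group
    rw [h1, h2] at this
    exact this.symm
  · intro h
    ext x
    rw [mem_map_conj', mem_map_conj']
    have := h (b⁻¹ * x * b)
    have h2 : a⁻¹ * b * (b⁻¹ * x * b) * (a⁻¹ * b)⁻¹ = a⁻¹ * x * a := by group
    rw [h2] at this
    exact this.symm

lemma map_conj_conj' (K : Subgroup S) (c s : S) :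
    Subgroup.map (MulAut.conj c).toMonoidHom (Subgroup.map (MulAut.conj s).toMonoidHom K) =
      Subgroup.map (MulAut.conj (c * s)).toMonoidHom K := by
  ext x
  rw [mem_map_conj', mem_map_conj', mem_map_conj',
    show s⁻¹ * (c⁻¹ * x * c) * s = (c * s)⁻¹ * x * (c * s) by group]

lemma cent_conj {t c : S} (hc : c ∈ Subgroup.centralizer {t}) : c⁻¹ * t * c = t := by
  have h := hc t rfl
  rw [mul_assoc, h, ← mul_assoc, inv_mul_cancel, one_mul]

def Corb (K : Subgroup S) (t s : S) : Set (Subgroup S) :=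
  {K'' : Subgroup S | ∃ c ∈ Subgroup.centralizer {t},
    K'' = Subgroup.map (MulAut.conj c).toMonoidHom (Subgroup.map (MulAut.conj s).toMonoidHom K)}

def Nset (K : Subgroup S) (t s : S) : Set S :=
  {t'' : S | ∃ n ∈ Subgroup.normalizer (K : Set S), t'' = n⁻¹ * (s⁻¹ * t * s) * n}

lemma Corb_eq_iff (K : Subgroup S) (t s s' : S) :
    Corb K t s = Corb K t s' ↔
      ∃ c ∈ Subgroup.centralizer {t}, ∃ n ∈ Subgroup.normalizer (K : Set S), s' = c * s * n := by
  constructor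
  · intro h
    have hmem : Subgroup.map (MulAut.conj s').toMonoidHom K ∈ Corb K t s' :=
      ⟨1, one_mem _, by rw [map_conj_conj', one_mul]⟩
    rw [← h] at hmem
    obtain ⟨c, hc, heq⟩ := hmem
    rw [map_conj_conj'] at heq
    have hn := (map_conj_eq_iff' K s' (c * s)).1 heq
    refine ⟨c, hc, (s'⁻¹ * (c * s))⁻¹, inv_mem hn, by group⟩
  · rintro ⟨c, hc, n, hn, rfl⟩
    ext K''
    constructor
    · rintro ⟨c', hc', rfl⟩
      refine ⟨c' * c⁻¹, mul_mem hc' (inv_mem hc), ?_⟩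
      rw [map_conj_conj', map_conj_conj']
      refine (map_conj_eq_iff' K _ _).2 ?_
      have h3 : (c' * s)⁻¹ * (c' * c⁻¹ * (c * s * n)) = n := by group
      rw [h3]; exact hn
    · rintro ⟨c', hc', rfl⟩
      refine ⟨c' * c, mul_mem hc' hc, ?_⟩
      rw [map_conj_conj', map_conj_conj']
      refine (map_conj_eq_iff' K _ _).2 ?_
      have h3 : (c' * (c * s * n))⁻¹ * (c' * c * s) = n⁻¹ := by group
      rw [h3]; exact inv_mem hn

lemma Nset_eq_iff (K : Subgroup S) (t s s' : S) :
    Nset K t s = Nset K t s' ↔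
      ∃ c ∈ Subgroup.centralizer {t}, ∃ n ∈ Subgroup.normalizer (K : Set S), s' = c * s * n := by
  constructor
  · intro h
    have hmem : s'⁻¹ * t * s' ∈ Nset K t s' := ⟨1, one_mem _, by group⟩
    rw [← h] at hmem
    obtain ⟨n, hn, heq⟩ := hmem
    refine ⟨s' * n⁻¹ * s⁻¹, ?_, n, hn, by group⟩
    intro x hx
    rw [Set.mem_singleton_iff] at hx
    rw [hx]
    -- t * (s' * n⁻¹ * s⁻¹) = (s' * n⁻¹ * s⁻¹) * t
    have : t * s' = s' * (n⁻¹ * (s⁻¹ * t * s) * n) := by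
      rw [← heq]; group
    calc t * (s' * n⁻¹ * s⁻¹) = (t * s') * n⁻¹ * s⁻¹ := by group
      _ = (s' * (n⁻¹ * (s⁻¹ * t * s) * n)) * n⁻¹ * s⁻¹ := by rw [this]
      _ = (s' * n⁻¹ * s⁻¹) * t := by group
  · rintro ⟨c, hc, n, hn, rfl⟩
    have key : (c * s * n)⁻¹ * t * (c * s * n) = n⁻¹ * (s⁻¹ * t * s) * n := by
      rw [show (c * s * n)⁻¹ * t * (c * s * n) = n⁻¹ * (s⁻¹ * (c⁻¹ * t * c) * s) * n by group,
        cent_conj hc]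
    ext x
    constructor
    · rintro ⟨n', hn', rfl⟩
      refine ⟨n⁻¹ * n', mul_mem (inv_mem hn) hn', ?_⟩
      rw [key]; group
    · rintro ⟨n', hn', rfl⟩
      refine ⟨n * n', mul_mem hn hn', ?_⟩
      rw [key]; group

end Aux

theorem XKt_orbit_bijection {S : Type*} [Group S] [Finite S] (K : Subgroup S) (t : S) :
    (∀ c ∈ Subgroup.centralizer {t}, ∀ K' : Subgroup S,
      ((∃ s : S, K' = Subgroup.map (MulAut.conj s).toMonoidHom K) ∧ t ∈ K') →
      ((∃ s : S, Subgroup.map (MulAut.conj c).toMonoidHom K' =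
          Subgroup.map (MulAut.conj s).toMonoidHom K) ∧
        t ∈ Subgroup.map (MulAut.conj c).toMonoidHom K')) ∧
    (∀ n ∈ Subgroup.normalizer (K : Set S), ∀ t' : S,
      (t' ∈ K ∧ ∃ s : S, t' = s⁻¹ * t * s) →
      (n⁻¹ * t' * n ∈ K ∧ ∃ s : S, n⁻¹ * t' * n = s⁻¹ * t * s)) ∧
    ∃ e : {O : Set (Subgroup S) // ∃ K' : Subgroup S,
          ((∃ s : S, K' = Subgroup.map (MulAut.conj s).toMonoidHom K) ∧ t ∈ K') ∧
          O = {K'' : Subgroup S | ∃ c ∈ Subgroup.centralizer {t},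
            K'' = Subgroup.map (MulAut.conj c).toMonoidHom K'}} ≃
        {O : Set S // ∃ t' : S, (t' ∈ K ∧ ∃ s : S, t' = s⁻¹ * t * s) ∧
          O = {t'' : S | ∃ n ∈ Subgroup.normalizer (K : Set S), t'' = n⁻¹ * t' * n}},
      ∀ (s : S) (_ : s⁻¹ * t * s ∈ K)
        (u : {O : Set (Subgroup S) // ∃ K' : Subgroup S,
          ((∃ s' : S, K' = Subgroup.map (MulAut.conj s').toMonoidHom K) ∧ t ∈ K') ∧
          O = {K'' : Subgroup S | ∃ c ∈ Subgroup.centralizer {t},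
            K'' = Subgroup.map (MulAut.conj c).toMonoidHom K'}}),
        (u : Set (Subgroup S)) = {K'' : Subgroup S | ∃ c ∈ Subgroup.centralizer {t},
            K'' = Subgroup.map (MulAut.conj c).toMonoidHom
              (Subgroup.map (MulAut.conj s).toMonoidHom K)} →
        (e u : Set S) = {t'' : S | ∃ n ∈ Subgroup.normalizer (K : Set S), t'' = n⁻¹ * (s⁻¹ * t * s) * n} := by
  classical
  refine ⟨?_, ?_, ?_⟩
  · rintro c hc K' ⟨⟨s, rfl⟩, ht⟩
    refine ⟨⟨c * s, map_conj_conj' K c s⟩, ?_⟩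
    rw [mem_map_conj', cent_conj hc]
    exact ht
  · rintro n hn t' ⟨htK, s, rfl⟩
    constructor
    · have := (Subgroup.mem_normalizer_iff.1 hn (n⁻¹ * (s⁻¹ * t * s) * n)).2
      apply this
      simpa [show n * (n⁻¹ * (s⁻¹ * t * s) * n) * n⁻¹ = s⁻¹ * t * s by group] using htK
    · exact ⟨s * n, by group⟩
  · have keyA : ∀ u : {O : Set (Subgroup S) // ∃ K' : Subgroup S,
          ((∃ s : S, K' = Subgroup.map (MulAut.conj s).toMonoidHom K) ∧ t ∈ K') ∧
          O = {K'' : Subgroup S | ∃ c ∈ Subgroup.centralizer {t},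
            K'' = Subgroup.map (MulAut.conj c).toMonoidHom K'}},
        ∃ s : S, s⁻¹ * t * s ∈ K ∧ (u : Set (Subgroup S)) = Corb K t s := by
      rintro ⟨O, K', ⟨⟨s, rfl⟩, ht⟩, rfl⟩
      exact ⟨s, (mem_map_conj' K s t).1 ht, rfl⟩
    have keyB : ∀ v : {O : Set S // ∃ t' : S, (t' ∈ K ∧ ∃ s : S, t' = s⁻¹ * t * s) ∧
          O = {t'' : S | ∃ n ∈ Subgroup.normalizer (K : Set S), t'' = n⁻¹ * t' * n}},
        ∃ s : S, s⁻¹ * t * s ∈ K ∧ (v : Set S) = Nset K t s := by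
      rintro ⟨O, t', ⟨htK, s, rfl⟩, rfl⟩
      exact ⟨s, htK, rfl⟩
    choose σA hA1 hA2 using keyA
    choose σB hB1 hB2 using keyB
    have wd : ∀ s s', Corb K t s = Corb K t s' → Nset K t s = Nset K t s' :=
      fun s s' h => (Nset_eq_iff K t s s').2 ((Corb_eq_iff K t s s').1 h)
    have wd' : ∀ s s', Nset K t s = Nset K t s' → Corb K t s = Corb K t s' :=
      fun s s' h => (Corb_eq_iff K t s s').2 ((Nset_eq_iff K t s s').1 h)
    refine ⟨⟨fun u => ⟨Nset K t (σA u), (σA u)⁻¹ * t * (σA u), ⟨hA1 u, σA u, rfl⟩, rfl⟩,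
        fun v => ⟨Corb K t (σB v), Subgroup.map (MulAut.conj (σB v)).toMonoidHom K,
          ⟨⟨σB v, rfl⟩, (mem_map_conj' K (σB v) t).2 (hB1 v)⟩, rfl⟩, ?_, ?_⟩, ?_⟩
    · intro u
      apply Subtype.ext
      show Corb K t (σB _) = (u : Set (Subgroup S))
      rw [hA2 u]
      exact wd' _ _ (hB2 _).symm
    · intro v
      apply Subtype.ext
      show Nset K t (σA _) = (v : Set S)
      rw [hB2 v]
      exact wd _ _ (hA2 _).symm
    · intro s hs u hu
      show Nset K t (σA u) = Nset K t s
      apply wd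
      rw [← hA2 u]
      exact hu
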